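/- Let $1<p<q<r$, $0<\gamma<1$, $K,M\geq 0$, $L>0$, $\lambda>0$, and set $\Phi(t)=t^{p-r}K+t^{q-r}M-t^{1-r-\gamma}L$. If $\max_{t>0}\Phi(t) > \lambda N$ for some $N>0$, then there exist $0<t_1<t_0<t_2$ with $\Phi(t_1)=\lambda N=\Phi(t_2)$, $\Phi'(t_1)>0$, and $\Phi'(t_2)<0$, where $t_0$ is a maximizer of $\Phi$. -/

import Mathlib

theorem stmt_7 (p q r γ K M L N lam t₀ : ℝ) (hp : 1 < p) (hpq : p < q) (hqr : q < r)
    (hγ0 : 0 < γ) (hγ1 : γ < 1) (hK : 0 ≤ K) (hM : 0 ≤ M) (hL : 0 < L)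
    (hlam : 0 < lam) (hN : 0 < N)
    (Φ : ℝ → ℝ) (hΦ : Φ = fun t => t ^ (p - r) * K + t ^ (q - r) * M - t ^ (1 - r - γ) * L)
    (ht₀ : 0 < t₀) (hmax : ∀ t : ℝ, 0 < t → Φ t ≤ Φ t₀)
    (hgt : lam * N < Φ t₀) :
    ∃ t₁ t₂ : ℝ, 0 < t₁ ∧ t₁ < t₀ ∧ t₀ < t₂ ∧
      Φ t₁ = lam * N ∧ Φ t₂ = lam * N ∧
      0 < deriv Φ t₁ ∧ deriv Φ t₂ < 0 := by
  set F : ℝ → ℝ := fun t => (p - r) * K * t ^ (p + γ - 1) + (q - r) * M * t ^ (q + γ - 1)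
      + (r + γ - 1) * L with hF
  -- derivative of Φ
  have hd : ∀ t : ℝ, 0 < t → HasDerivAt Φ (t ^ (-r - γ) * F t) t := by
    intro t ht
    rw [hΦ]
    have h1 := (Real.hasDerivAt_rpow_const (p := p - r) (Or.inl ht.ne')).mul_const K
    have h2 := (Real.hasDerivAt_rpow_const (p := q - r) (Or.inl ht.ne')).mul_const M
    have h3 := (Real.hasDerivAt_rpow_const (p := 1 - r - γ) (Or.inl ht.ne')).mul_const L
    have h := (h1.add h2).sub h3
    refine h.congr_deriv ?_
    have e1 : p - r - 1 = (-r - γ) + (p + γ - 1) := by ring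
    have e2 : q - r - 1 = (-r - γ) + (q + γ - 1) := by ring
    have e3 : 1 - r - γ - 1 = -r - γ := by ring
    rw [hF]
    simp only
    rw [e1, e2, e3, Real.rpow_add ht, Real.rpow_add ht]
    ring
  -- F is antitone on positives
  have hFanti : ∀ a b : ℝ, 0 < a → a ≤ b → F b ≤ F a := by
    intro a b ha hab
    have h1 : a ^ (p + γ - 1) ≤ b ^ (p + γ - 1) :=
      Real.rpow_le_rpow ha.le hab (by linarith)
    have h2 : a ^ (q + γ - 1) ≤ b ^ (q + γ - 1) :=
      Real.rpow_le_rpow ha.le hab (by linarith)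
    have c1 : (p - r) * K ≤ 0 := mul_nonpos_of_nonpos_of_nonneg (by linarith) hK
    have c2 : (q - r) * M ≤ 0 := mul_nonpos_of_nonpos_of_nonneg (by linarith) hM
    have := mul_le_mul_of_nonpos_left h1 c1
    have := mul_le_mul_of_nonpos_left h2 c2
    simp only [hF]
    linarith
  -- continuity on positive closed intervals
  have hcont : ∀ a b : ℝ, 0 < a → ContinuousOn Φ (Set.Icc a b) := by
    intro a b ha t ht
    exact ((hd t (lt_of_lt_of_le ha ht.1)).differentiableAt).continuousAt.continuousWithinAt
  have hdiff : ∀ a b : ℝ, 0 < a → DifferentiableOn ℝ Φ (interior (Set.Icc a b)) := by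
    intro a b ha t ht
    rw [interior_Icc] at ht
    exact ((hd t (lt_trans ha ht.1)).differentiableAt).differentiableWithinAt
  -- small point with Φ < lam * N
  have hsmall : ∃ a : ℝ, 0 < a ∧ a < t₀ ∧ Φ a < lam * N := by
    set c : ℝ := (L / (K + M + 1)) ^ ((p + γ - 1)⁻¹) with hc
    have hcpos : 0 < c := Real.rpow_pos_of_pos (by positivity) _
    refine ⟨min (t₀ / 2) (min (1 / 2) (c / 2)), by positivity, ?_, ?_⟩
    · calc min (t₀ / 2) (min (1 / 2) (c / 2)) ≤ t₀ / 2 := min_le_left _ _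
        _ < t₀ := by linarith
    · set a : ℝ := min (t₀ / 2) (min (1 / 2) (c / 2)) with hadef
      have ha : 0 < a := by positivity
      have ha1 : a ≤ 1 := le_trans (le_trans (min_le_right _ _) (min_le_left _ _)) (by norm_num)
      have hac : a < c := lt_of_le_of_lt (le_trans (min_le_right _ _) (min_le_right _ _))
        (by linarith)
      have he : (0:ℝ) < p + γ - 1 := by linarith
      have hlt : a ^ (p + γ - 1) < L / (K + M + 1) := by
        have := Real.rpow_lt_rpow ha.le hac he
        rwa [hc, Real.rpow_inv_rpow (by positivity) he.ne'] at this
      have h21 : a ^ (q + γ - 1) ≤ a ^ (p + γ - 1) :=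
        Real.rpow_le_rpow_of_exponent_ge ha ha1 (by linarith)
      have hGneg : a ^ (p + γ - 1) * K + a ^ (q + γ - 1) * M - L < 0 := by
        have hp1 : 0 < a ^ (p + γ - 1) := Real.rpow_pos_of_pos ha _
        have key : a ^ (p + γ - 1) * (K + M + 1) < L :=
          (lt_div_iff₀ (by positivity : (0:ℝ) < K + M + 1)).mp hlt
        nlinarith [mul_le_mul_of_nonneg_right h21 hM]
      have hsplit : Φ a = a ^ (1 - r - γ) *
          (a ^ (p + γ - 1) * K + a ^ (q + γ - 1) * M - L) := by
        rw [hΦ]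
        simp only
        have e1 : p - r = (1 - r - γ) + (p + γ - 1) := by ring
        have e2 : q - r = (1 - r - γ) + (q + γ - 1) := by ring
        rw [e1, e2, Real.rpow_add ha, Real.rpow_add ha]
        ring
      have hpos : 0 < a ^ (1 - r - γ) := Real.rpow_pos_of_pos ha _
      have : Φ a < 0 := by
        rw [hsplit]
        exact mul_neg_of_pos_of_neg hpos hGneg
      nlinarith
  -- large point with Φ < lam * N
  have hbig : ∃ b : ℝ, t₀ < b ∧ Φ b < lam * N := by
    set c : ℝ := ((K + M + 1) / (lam * N)) ^ ((r - q)⁻¹) with hc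
    have hcpos : 0 < c := Real.rpow_pos_of_pos (by positivity) _
    refine ⟨max (t₀ + 1) (max 1 (c + 1)), lt_of_lt_of_le (by linarith) (le_max_left _ _), ?_⟩
    set b : ℝ := max (t₀ + 1) (max 1 (c + 1)) with hbdef
    have hb1 : (1:ℝ) ≤ b := le_trans (le_max_left _ _) (le_max_right _ _)
    have hb0 : 0 < b := by linarith
    have hbc : c < b := lt_of_lt_of_le (by linarith)
      (le_trans (le_max_right _ _) (le_max_right _ _))
    have he : (0:ℝ) < r - q := by linarith
    have hrp : (K + M + 1) / (lam * N) < b ^ (r - q) := by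
      have := Real.rpow_lt_rpow hcpos.le hbc he
      rwa [hc, Real.rpow_inv_rpow (by positivity) he.ne'] at this
    have hbpr : b ^ (q - r) < lam * N / (K + M + 1) := by
      have hbrp : 0 < b ^ (r - q) := Real.rpow_pos_of_pos hb0 _
      have heq : b ^ (q - r) = (b ^ (r - q))⁻¹ := by
        rw [show q - r = -(r - q) by ring, Real.rpow_neg hb0.le]
      rw [heq, inv_lt_comm₀ hbrp (by positivity), inv_div]
      exact hrp
    have hqp : b ^ (p - r) ≤ b ^ (q - r) :=
      Real.rpow_le_rpow_of_exponent_le hb1 (by linarith)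
    have hLterm : 0 < b ^ (1 - r - γ) * L :=
      mul_pos (Real.rpow_pos_of_pos hb0 _) hL
    have hbq : 0 < b ^ (q - r) := Real.rpow_pos_of_pos hb0 _
    rw [hΦ]
    simp only
    have h1 : b ^ (p - r) * K + b ^ (q - r) * M ≤ b ^ (q - r) * (K + M) := by nlinarith
    have h2 : b ^ (q - r) * (K + M) < lam * N := by
      have := mul_le_mul_of_nonneg_right hbpr.le (by positivity : (0:ℝ) ≤ K + M)
      have hfr : lam * N / (K + M + 1) * (K + M) < lam * N := by
        rw [div_mul_eq_mul_div, div_lt_iff₀ (by positivity : (0:ℝ) < K + M + 1)]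
        nlinarith
      linarith
    linarith
  obtain ⟨a, ha0, hat₀, hΦa⟩ := hsmall
  obtain ⟨b, ht₀b, hΦb⟩ := hbig
  -- IVT on each side
  obtain ⟨t₁, ht₁mem, ht₁val⟩ := intermediate_value_Ioo hat₀.le (hcont a t₀ ha0)
    (Set.mem_Ioo.mpr ⟨hΦa, hgt⟩)
  obtain ⟨t₂, ht₂mem, ht₂val⟩ := intermediate_value_Ioo' ht₀b.le (hcont t₀ b ht₀)
    (Set.mem_Ioo.mpr ⟨hΦb, hgt⟩)
  have ht₁0 : 0 < t₁ := lt_trans ha0 ht₁mem.1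
  have ht₂0 : 0 < t₂ := lt_trans ht₀ ht₂mem.1
  refine ⟨t₁, t₂, ht₁0, ht₁mem.2, ht₂mem.1, ht₁val, ht₂val, ?_, ?_⟩
  · -- deriv Φ t₁ > 0
    have hF1 : 0 < F t₁ := by
      by_contra h
      push_neg at h
      have hanti : AntitoneOn Φ (Set.Icc t₁ t₀) := by
        apply antitoneOn_of_deriv_nonpos (convex_Icc _ _) (hcont t₁ t₀ ht₁0)
          (hdiff t₁ t₀ ht₁0)
        intro t ht
        rw [interior_Icc] at ht
        have ht' : 0 < t := lt_trans ht₁0 ht.1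
        rw [(hd t ht').deriv]
        have hFt : F t ≤ F t₁ := hFanti t₁ t ht₁0 ht.1.le
        have hpos : 0 < t ^ (-r - γ) := Real.rpow_pos_of_pos ht' _
        exact mul_nonpos_iff.mpr (Or.inl ⟨hpos.le, hFt.trans h⟩)
      have := hanti (Set.left_mem_Icc.mpr ht₁mem.2.le) (Set.right_mem_Icc.mpr ht₁mem.2.le)
        ht₁mem.2.le
      rw [ht₁val] at this
      linarith
    rw [(hd t₁ ht₁0).deriv]
    exact mul_pos (Real.rpow_pos_of_pos ht₁0 _) hF1
  · -- deriv Φ t₂ < 0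
    have hF2 : F t₂ < 0 := by
      by_contra h
      push_neg at h
      have hmono : MonotoneOn Φ (Set.Icc t₀ t₂) := by
        apply monotoneOn_of_deriv_nonneg (convex_Icc _ _) (hcont t₀ t₂ ht₀)
          (hdiff t₀ t₂ ht₀)
        intro t ht
        rw [interior_Icc] at ht
        have ht' : 0 < t := lt_trans ht₀ ht.1
        rw [(hd t ht').deriv]
        have hFt : F t₂ ≤ F t := hFanti t t₂ ht' ht.2.le
        have hpos : 0 < t ^ (-r - γ) := Real.rpow_pos_of_pos ht' _
        exact mul_nonneg hpos.le (h.trans hFt)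
      have := hmono (Set.left_mem_Icc.mpr ht₂mem.1.le) (Set.right_mem_Icc.mpr ht₂mem.1.le)
        ht₂mem.1.le
      rw [ht₂val] at this
      linarith
    rw [(hd t₂ ht₂0).deriv]
    exact mul_neg_of_pos_of_neg (Real.rpow_pos_of_pos ht₂0 _) hF2
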